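/- A primitive word u is not ins-robust if and only if uu contains a factor of length |u| that is periodic with some period p such that p divides |u| + 1 and p ≤ |u|. -/

import Mathlib

/-- `wpow v n` is the word `v` repeated `n` times. -/
def wpow {V : Type*} (v : List V) : ℕ → List V
  | 0 => []
  | n + 1 => v ++ wpow v n

/-- A word is primitive if it is nonempty and not a proper power. -/
def Primitive {V : Type*} (w : List V) : Prop :=
  w ≠ [] ∧ ∀ (v : List V) (n : ℕ), w = wpow v n → n = 1

/-- A word is ins-robust if it is primitive and inserting any letter at any
position yields a primitive word. -/
def InsRobust {V : Type*} (w : List V) : Prop :=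
  Primitive w ∧ ∀ (x y : List V) (a : V), w = x ++ y → Primitive (x ++ a :: y)

/-- `HasPeriod w p` : the word `w` is periodic with period `p`. -/
def HasPeriod {V : Type*} (w : List V) (p : ℕ) : Prop :=
  ∀ i, i + p < w.length → w[i]? = w[i + p]?

namespace Stmt15Aux

theorem wpow_nil {V : Type*} (n : ℕ) : wpow ([] : List V) n = [] := by
  induction n with
  | zero => rfl
  | succ n ih => simp [wpow, ih]

theorem wpow_length {V : Type*} (v : List V) (n : ℕ) :
    (wpow v n).length = n * v.length := by
  induction n with
  | zero => simp [wpow]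
  | succ n ih => simp only [wpow, List.length_append, ih, Nat.succ_mul]; omega

theorem wpow_comm {V : Type*} (x y : List V) (k : ℕ) :
    wpow (x ++ y) k ++ x = x ++ wpow (y ++ x) k := by
  induction k with
  | zero => simp [wpow]
  | succ k ih => simp only [wpow, List.append_assoc] at *; rw [ih]

theorem rot_wpow {V : Type*} :
    ∀ (c d z : List V) (m : ℕ), c ++ d = wpow z m →
      ∃ z', z'.length = z.length ∧ d ++ c = wpow z' m := by
  intro c
  induction c with
  | nil => intro d z m h; exact ⟨z, rfl, by simpa using h⟩
  | cons e c' ih =>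
    intro d z m h
    match m, z with
    | 0, z => simp [wpow] at h
    | m + 1, [] => rw [wpow_nil] at h; simp at h
    | m + 1, e' :: z₁ =>
      simp only [wpow, List.cons_append, List.cons.injEq] at h
      obtain ⟨rfl, h2⟩ := h
      have key : c' ++ (d ++ [e]) = wpow (z₁ ++ [e]) (m + 1) := by
        have : c' ++ d ++ [e] = z₁ ++ (wpow (e :: z₁) m ++ [e]) := by
          rw [h2, List.append_assoc]
        rw [show (e :: z₁ : List V) = [e] ++ z₁ from rfl, wpow_comm [e] z₁ m] at this
        simp only [wpow, List.append_assoc]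
        simpa [List.append_assoc] using this
      obtain ⟨z', hz'len, hz'⟩ := ih (d ++ [e]) (z₁ ++ [e]) (m + 1) key
      refine ⟨z', ?_, ?_⟩
      · simp at hz'len ⊢; omega
      · simpa [List.append_assoc] using hz'

theorem wpow_getElem? {V : Type*} (v : List V) (n i : ℕ) (h : i < n * v.length) :
    (wpow v n)[i]? = v[i % v.length]? := by
  induction n generalizing i with
  | zero => omega
  | succ n ih =>
    have hv : 0 < v.length := by
      rcases Nat.eq_zero_or_pos v.length with h0 | h0
      · rw [h0, Nat.mul_zero] at h; omega
      · exact h0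
    simp only [wpow, List.getElem?_append]
    by_cases hi : i < v.length
    · rw [if_pos hi, Nat.mod_eq_of_lt hi]
    · rw [if_neg hi]
      have hle : v.length ≤ i := by omega
      rw [ih (i - v.length) (by rw [Nat.succ_mul] at h; omega),
        Nat.mod_eq_sub_mod hle]

theorem hasPeriod_wpow {V : Type*} (v : List V) (n : ℕ) :
    HasPeriod (wpow v n) v.length := by
  intro i hi
  rw [wpow_length] at hi
  rw [wpow_getElem? v n i (by omega), wpow_getElem? v n (i + v.length) hi,
    Nat.add_mod_right]

theorem hasPeriod_prefix {V : Type*} {w l : List V} {p : ℕ}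
    (hw : HasPeriod w p) (hl : l <+: w) : HasPeriod l p := by
  obtain ⟨t, rfl⟩ := hl
  intro i hi
  have h1 : i < l.length := by omega
  have h2 : i + p < l.length := hi
  have := hw i (by simp; omega)
  rwa [List.getElem?_append, if_pos h1, List.getElem?_append, if_pos h2] at this

theorem periodic_eq_wpow {V : Type*} {w : List V} {p m : ℕ}
    (hw : HasPeriod w p) (hp : 0 < p) (hm : w.length = m * p) :
    w = wpow (w.take p) m := by
  rcases Nat.eq_zero_or_pos m with rfl | hm1
  · have : w = [] := List.eq_nil_of_length_eq_zero (by omega)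
    simp [this, wpow]
  have hpw : p ≤ w.length := by
    calc p = 1 * p := (one_mul p).symm
    _ ≤ m * p := Nat.mul_le_mul_right p hm1
    _ = w.length := hm.symm
  have htl : (w.take p).length = p := by simp; omega
  have key : ∀ i, i < w.length → w[i]? = w[i % p]? := by
    intro i
    induction i using Nat.strong_induction_on with
    | _ i ihh =>
      intro hi
      by_cases h : i < p
      · rw [Nat.mod_eq_of_lt h]
      · have h1 := hw (i - p) (by omega)
        have h2 := ihh (i - p) (by omega) (by omega)
        rw [show i - p + p = i by omega] at h1
        rw [← h1, h2, ← Nat.mod_eq_sub_mod (show i ≥ p by omega)]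
  apply List.ext_getElem?
  intro i
  by_cases hi : i < w.length
  · rw [wpow_getElem? _ m i (by rw [htl]; omega), htl, key i hi,
      List.getElem?_take, if_pos (Nat.mod_lt i hp)]
  · rw [List.getElem?_eq_none (by omega), List.getElem?_eq_none]
    rw [wpow_length, htl]; omega

end Stmt15Aux

open Stmt15Aux in
theorem stmt15 {V : Type*} (u : List V) (hu : Primitive u) :
    ¬ InsRobust u ↔ ∃ (f : List V) (p : ℕ),
      f <:+: (u ++ u) ∧ f.length = u.length ∧ p ∣ u.length + 1 ∧ p ≤ u.length ∧
      HasPeriod f p := by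
  have hN : 0 < u.length := List.length_pos_iff.mpr hu.1
  set N := u.length with hNdef
  constructor
  · -- forward
    intro hnr
    have hne : ∃ x y : List V, ∃ a : V, u = x ++ y ∧ ¬ Primitive (x ++ a :: y) := by
      by_contra hc
      push_neg at hc
      exact hnr ⟨hu, fun x y a hxy => hc x y a hxy⟩
    obtain ⟨x, y, a, hxy, hnp⟩ := hne
    have hwne : (x ++ a :: y : List V) ≠ [] := by simp
    have : ∃ (v : List V) (n : ℕ), x ++ a :: y = wpow v n ∧ n ≠ 1 := by
      by_contra hc
      push_neg at hc
      exact hnp ⟨hwne, fun v n h => hc v n h⟩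
    obtain ⟨v, n, hvn, hn1⟩ := this
    have hn0 : n ≠ 0 := by
      rintro rfl; exact hwne (by simpa [wpow] using hvn)
    have hv0 : v ≠ [] := by
      rintro rfl; rw [wpow_nil] at hvn; exact hwne hvn
    set p := v.length with hpdef
    have hp0 : 0 < p := List.length_pos_iff.mpr hv0
    have hlen : n * p = N + 1 := by
      have hl := congrArg List.length hvn
      simp only [List.length_append, List.length_cons, wpow_length] at hl
      have hl2 := congrArg List.length hxy
      simp only [List.length_append] at hl2
      rw [hpdef]
      omega
    have hn2 : 2 ≤ n := by omega
    have h2p : 2 * p ≤ n * p := Nat.mul_le_mul_right p hn2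
    -- rotate
    have hrot : (x ++ [a]) ++ y = wpow v n := by simpa using hvn
    obtain ⟨z', hz'len, hz'⟩ := rot_wpow (x ++ [a]) y v n hrot
    refine ⟨y ++ x, p, ?_, ?_, ⟨n, by rw [mul_comm]; omega⟩, by omega, ?_⟩
    · exact ⟨x, y, by rw [hxy]; simp [List.append_assoc]⟩
    · have hl2 := congrArg List.length hxy
      simp only [List.length_append] at hl2 ⊢
      omega
    · have hpref : (y ++ x) <+: wpow z' n := ⟨[a], by simpa [List.append_assoc] using hz'⟩
      have hh := hasPeriod_prefix (hasPeriod_wpow z' n) hpref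
      rw [hpdef, ← hz'len]
      exact hh
  · -- backward
    rintro ⟨f, p, hinf, hflen, hdvd, hple, hper⟩
    have hp0 : 0 < p := by
      rcases Nat.eq_zero_or_pos p with rfl | h
      · exact absurd (Nat.eq_zero_of_zero_dvd hdvd) (by omega)
      · exact h
    obtain ⟨s, t, hst⟩ := hinf
    have hslen : s.length ≤ N := by
      have := congrArg List.length hst
      simp [hflen] at this; omega
    set r := s.length with hrdef
    -- f is the rotation of u by r
    have hf : f = u.drop r ++ u.take r := by
      have h1 : f ++ t = List.drop r (u ++ u) := by
        rw [← hst, List.append_assoc, hrdef, List.drop_left]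
      have h2 : f = List.take N (f ++ t) := (List.take_left' hflen).symm
      rw [h2, h1, List.drop_append,
        show r - u.length = 0 by omega, List.drop_zero,
        List.take_append]
      have hdl : (List.drop r u).length = N - r := by simp [hNdef]
      rw [hdl, show N - (N - r) = r by omega,
        List.take_of_length_le (by rw [hdl]; omega)]
    set x := u.take r with hxdef
    set y := u.drop r with hydef
    have hxylen : y.length = N - r ∧ x.length = r := by
      constructor <;> simp [hxdef, hydef] <;> omega
    have huxy : u = x ++ y := (List.take_append_drop r u).symm
    -- extend f by one letter
    have hNp : N - p < f.length := by rw [hflen]; omega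
    set b := f[N - p]'hNp with hbdef
    set g := f ++ [b] with hgdef
    have hglen : g.length = N + 1 := by simp [hgdef, hflen]
    have hgper : HasPeriod g p := by
      intro i hi
      rw [hglen] at hi
      by_cases h : i + p < N
      · rw [hgdef, List.getElem?_append, if_pos (by rw [hflen]; omega),
          List.getElem?_append, if_pos (by rw [hflen]; omega)]
        exact hper i (by rw [hflen]; omega)
      · have hip : i + p = N := by omega
        have hiN : i = N - p := by omega
        rw [hgdef, List.getElem?_append, if_pos (by rw [hflen]; omega),
          List.getElem?_append, if_neg (by rw [hflen]; omega), hflen, hip,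
          Nat.sub_self]
        simp only [List.getElem?_cons_zero]
        rw [hiN, List.getElem?_eq_getElem hNp]
    obtain ⟨m, hm⟩ := hdvd
    have hm2 : 2 ≤ m := by
      by_contra h
      push_neg at h
      interval_cases m
      · simp at hm
      · simp at hm; omega
    have hgw : g = wpow (g.take p) m := periodic_eq_wpow hgper hp0 (by rw [hglen, hm, mul_comm])
    -- rotate back
    have hsplit : y ++ (x ++ [b]) = wpow (g.take p) m := by
      rw [← hgw, hgdef, hf, List.append_assoc]
    obtain ⟨z', _, hz'⟩ := rot_wpow y (x ++ [b]) (g.take p) m hsplit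
    have hins : x ++ b :: y = wpow z' m := by
      simpa [List.append_assoc] using hz'
    intro hr
    have hprim := hr.2 x y b huxy
    exact absurd (hprim.2 z' m hins) (by omega)
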